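/- Let α be a unit speed surface curve with Darboux curvatures k_g nowhere zero. Define E(s) = exp(∫(k_n τ_g / k_g) ds), y₃(s) = E(s)[c₃ − ∫ E(s)^{-1}(τ_g/k_g) ds], y₂(s) = −(k_n/k_g)y₃(s) + 1/k_g, and y₁ = 0. Then y₁' − k_g y₂ − k_n y₃ + 1 = 0 and y₃' + k_n y₁ + τ_g y₂ = 0, i.e., the curve γ(s) = α(s) + y₂(s)V(s) + y₃(s)U(s) satisfies γ'(s) parallel to V(s). -/

import Mathlib

noncomputable section

/-- RNS-HC-associated helix of type 1, case `k_g ≠ 0`. -/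
theorem stmt_7
    (α T V U γ : ℝ → EuclideanSpace ℝ (Fin 3)) (kg kn tg y₁ y₂ y₃ F G : ℝ → ℝ) (c₃ : ℝ)
    (hα : Differentiable ℝ α) (hT : Differentiable ℝ T)
    (hV : Differentiable ℝ V) (hU : Differentiable ℝ U)
    (hkgd : Differentiable ℝ kg) (hknd : Differentiable ℝ kn) (htgd : Differentiable ℝ tg)
    (hαT : ∀ s, deriv α s = T s)
    (hdT : ∀ s, deriv T s = kg s • V s + kn s • U s)
    (hdV : ∀ s, deriv V s = (-kg s) • T s + tg s • U s)
    (hdU : ∀ s, deriv U s = (-kn s) • T s + (-tg s) • V s)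
    (hkg : ∀ s, kg s ≠ 0)
    -- F is an antiderivative of k_n τ_g / k_g, so that E = exp F,
    -- and G is an antiderivative of E⁻¹ τ_g / k_g
    (hF : ∀ s, HasDerivAt F (kn s * tg s / kg s) s)
    (hG : ∀ s, HasDerivAt G ((Real.exp (F s))⁻¹ * (tg s / kg s)) s)
    (hy₃ : ∀ s, y₃ s = Real.exp (F s) * (c₃ - G s))
    (hy₂ : ∀ s, y₂ s = -(kn s / kg s) * y₃ s + 1 / kg s)
    (hy₁ : ∀ s, y₁ s = 0)
    (hγ : ∀ s, γ s = α s + y₂ s • V s + y₃ s • U s) :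
    (∀ s, deriv y₁ s - kg s * y₂ s - kn s * y₃ s + 1 = 0) ∧
    (∀ s, deriv y₃ s + kn s * y₁ s + tg s * y₂ s = 0) ∧
    (∃ r : ℝ → ℝ, ∀ s, deriv γ s = r s • V s) := by
  -- derivative of y₃
  have hy₃fun : y₃ = fun s => Real.exp (F s) * (c₃ - G s) := funext hy₃
  have hy₃d : ∀ s, HasDerivAt y₃
      (kn s * tg s / kg s * y₃ s - tg s / kg s) s := by
    intro s
    have h1 : HasDerivAt (fun s => Real.exp (F s))
        (kn s * tg s / kg s * Real.exp (F s)) s := by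
      simpa [mul_comm] using (hF s).exp
    have h2 : HasDerivAt (fun s => c₃ - G s)
        (-((Real.exp (F s))⁻¹ * (tg s / kg s))) s := (hG s).const_sub c₃
    have := h1.mul h2
    rw [hy₃fun]
    convert this using 1
    case e'_4 => rfl
    case e'_5 => rfl
    case e'_8 => rfl
    have hE : Real.exp (F s) ≠ 0 := Real.exp_ne_zero _
    have hcan : Real.exp (F s) * ((Real.exp (F s))⁻¹ * (tg s / kg s)) = tg s / kg s := by
      rw [← mul_assoc, mul_inv_cancel₀ hE, one_mul]
    rw [mul_neg, hcan]
    ring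
  have hy₃diff : Differentiable ℝ y₃ := fun s => (hy₃d s).differentiableAt
  -- y₁ deriv
  have hy₁fun : y₁ = fun _ => (0:ℝ) := funext hy₁
  have part1 : ∀ s, deriv y₁ s - kg s * y₂ s - kn s * y₃ s + 1 = 0 := by
    intro s
    rw [hy₁fun, deriv_const, hy₂ s]
    field_simp [hkg s]
    ring
  have part2 : ∀ s, deriv y₃ s + kn s * y₁ s + tg s * y₂ s = 0 := by
    intro s
    rw [(hy₃d s).deriv, hy₁ s, hy₂ s]
    field_simp [hkg s]
    ring
  refine ⟨part1, part2, fun s => deriv y₂ s - tg s * y₃ s, fun s => ?_⟩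
  -- differentiability of y₂
  have hy₂fun : y₂ = fun s => -(kn s / kg s) * y₃ s + 1 / kg s := funext hy₂
  have hy₂diff : Differentiable ℝ y₂ := by
    rw [hy₂fun]
    exact (((hknd.div hkgd hkg).neg.mul hy₃diff).add
      ((differentiable_const (1:ℝ)).div hkgd hkg))
  have hγd : HasDerivAt γ
      (T s + (y₂ s • deriv V s + deriv y₂ s • V s)
        + (y₃ s • deriv U s + deriv y₃ s • U s)) s := by
    have h1 : HasDerivAt α (T s) s := by
      simpa [hαT s] using (hα s).hasDerivAt
    have h2 : HasDerivAt (fun s => y₂ s • V s)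
        (y₂ s • deriv V s + deriv y₂ s • V s) s :=
      ((hy₂diff s).hasDerivAt).smul ((hV s).hasDerivAt)
    have h3 : HasDerivAt (fun s => y₃ s • U s)
        (y₃ s • deriv U s + deriv y₃ s • U s) s :=
      ((hy₃diff s).hasDerivAt).smul ((hU s).hasDerivAt)
    have := (h1.add h2).add h3
    rw [show γ = fun s => α s + y₂ s • V s + y₃ s • U s from funext hγ]
    exact this
  rw [hγd.deriv, hdV s, hdU s]
  have h1 : 1 - kg s * y₂ s - kn s * y₃ s = 0 := by
    have := part1 s; rw [hy₁fun] at this; simp at this; linarith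
  have h2 : deriv y₃ s + tg s * y₂ s = 0 := by
    have := part2 s; rw [hy₁ s] at this; linarith [this]
  -- combine
  have hT0 : (1 - kg s * y₂ s - kn s * y₃ s) • T s
      + (deriv y₂ s - tg s * y₃ s) • V s
      + (deriv y₃ s + tg s * y₂ s) • U s
      = (deriv y₂ s - tg s * y₃ s) • V s := by
    rw [h1, h2]; simp
  rw [← hT0]
  module
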